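/- Let n ≥ 1 and define, on smooth functions f : ℝ^n × ℝ^n × ℝ^n → ℂ, the operators P_s f = 𝔼(X_s f) + (n − 2) X_s f − (1/2) r² (D_t f) and P_t f = 𝔼(X_t f) + (n − 2) X_t f + (1/2) r² (D_s f). If f is harmonic, i.e. Δ f = Σ_{j=1}^n ( ∂²f/∂x_j² + ∂²f/∂y_j² ) = 0 identically, then P_s f and P_t f are again harmonic: Δ(P_s f) = 0 and Δ(P_t f) = 0. -/

import Mathlib

open Complex Finset Matrix

noncomputable section

/-- A point of `ℝ^n × ℝ^n × ℝ^n`, with coordinates `(x, y, q)`. -/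
abbrev Vec (n : ℕ) := (Fin n → ℝ) × (Fin n → ℝ) × (Fin n → ℝ)

/-- Partial derivative in the variable `x_j`. -/
noncomputable def pdx (n : ℕ) (j : Fin n) (f : Vec n → ℂ) : Vec n → ℂ :=
  fun p => deriv (fun t => f (Function.update p.1 j t, p.2.1, p.2.2)) (p.1 j)

/-- Partial derivative in the variable `y_j`. -/
noncomputable def pdy (n : ℕ) (j : Fin n) (f : Vec n → ℂ) : Vec n → ℂ :=
  fun p => deriv (fun t => f (p.1, Function.update p.2.1 j t, p.2.2)) (p.2.1 j)

/-- Partial derivative in the variable `q_j`. -/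
noncomputable def pdq (n : ℕ) (j : Fin n) (f : Vec n → ℂ) : Vec n → ℂ :=
  fun p => deriv (fun t => f (p.1, p.2.1, Function.update p.2.2 j t)) (p.2.2 j)

/-- The symplectic Dirac operator `D_s f = Σ_j (i q_j ∂f/∂y_j − ∂²f/∂q_j∂x_j)`. -/
noncomputable def Ds (n : ℕ) (f : Vec n → ℂ) : Vec n → ℂ :=
  fun p => ∑ j : Fin n, (Complex.I * (p.2.2 j : ℂ) * pdy n j f p - pdq n j (pdx n j f) p)

/-- The twisted symplectic Dirac operator `D_t f = Σ_j (i q_j ∂f/∂x_j + ∂²f/∂y_j∂q_j)`. -/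
noncomputable def Dt (n : ℕ) (f : Vec n → ℂ) : Vec n → ℂ :=
  fun p => ∑ j : Fin n, (Complex.I * (p.2.2 j : ℂ) * pdx n j f p + pdy n j (pdq n j f) p)

/-- The Fischer dual `X_s f = Σ_j (y_j ∂f/∂q_j + i q_j x_j f)`. -/
noncomputable def Xs (n : ℕ) (f : Vec n → ℂ) : Vec n → ℂ :=
  fun p => ∑ j : Fin n, ((p.2.1 j : ℂ) * pdq n j f p + Complex.I * (p.2.2 j : ℂ) * (p.1 j : ℂ) * f p)

/-- The Fischer dual `X_t f = Σ_j (x_j ∂f/∂q_j − i y_j q_j f)`. -/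
noncomputable def Xt (n : ℕ) (f : Vec n → ℂ) : Vec n → ℂ :=
  fun p => ∑ j : Fin n, ((p.1 j : ℂ) * pdq n j f p - Complex.I * (p.2.1 j : ℂ) * (p.2.2 j : ℂ) * f p)

/-- The Euler operator `𝔼 f = Σ_j (x_j ∂f/∂x_j + y_j ∂f/∂y_j)`. -/
noncomputable def EulerOp (n : ℕ) (f : Vec n → ℂ) : Vec n → ℂ :=
  fun p => ∑ j : Fin n, ((p.1 j : ℂ) * pdx n j f p + (p.2.1 j : ℂ) * pdy n j f p)

/-- The Laplacian in the `(x,y)` variables. -/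
noncomputable def Lap (n : ℕ) (f : Vec n → ℂ) : Vec n → ℂ :=
  fun p => ∑ j : Fin n, (pdx n j (pdx n j f) p + pdy n j (pdy n j f) p)
/-- Multiplication by `r² = Σ_j (x_j² + y_j²)`. -/
noncomputable def r2 (n : ℕ) (p : Vec n) : ℂ :=
  ((∑ j : Fin n, ((p.1 j) ^ 2 + (p.2.1 j) ^ 2) : ℝ) : ℂ)

/-- The rescaled extremal projection `P_s f = (𝔼 + n − 2) X_s f − (1/2) r² D_t f`. -/
noncomputable def PsOp (n : ℕ) (f : Vec n → ℂ) : Vec n → ℂ :=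
  fun p => EulerOp n (Xs n f) p + ((n : ℂ) - 2) * Xs n f p - (1 / 2 : ℂ) * r2 n p * Dt n f p

/-- The rescaled extremal projection `P_t f = (𝔼 + n − 2) X_t f + (1/2) r² D_s f`. -/
noncomputable def PtOp (n : ℕ) (f : Vec n → ℂ) : Vec n → ℂ :=
  fun p => EulerOp n (Xt n f) p + ((n : ℂ) - 2) * Xt n f p + (1 / 2 : ℂ) * r2 n p * Ds n f p
namespace Aux
variable {n : ℕ}

abbrev Sm (f : Vec n → ℂ) : Prop := ContDiff ℝ (⊤ : ℕ∞) f

lemma top_le : (1 : WithTop ℕ∞) ≤ ((⊤ : ℕ∞) : WithTop ℕ∞) := by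
  exact_mod_cast le_top

/-- directional derivative -/
def DD (v : Vec n) (f : Vec n → ℂ) : Vec n → ℂ := fun p => fderiv ℝ f p v

lemma Sm.diffAt {f : Vec n → ℂ} (hf : Sm f) (p : Vec n) : DifferentiableAt ℝ f p :=
  (hf.differentiable (by simp)) p

lemma Sm.fderivSm {f : Vec n → ℂ} (hf : Sm f) : ContDiff ℝ (⊤ : ℕ∞) (fderiv ℝ f) := by
  apply hf.fderiv_right
  norm_cast

lemma Sm.DD {f : Vec n → ℂ} (hf : Sm f) (v : Vec n) : Sm (Aux.DD v f) :=
  hf.fderivSm.clm_apply contDiff_const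

/-- basis vectors -/
def E1 (j : Fin n) : Vec n := (Pi.single j 1, 0, 0)
def E2 (j : Fin n) : Vec n := (0, Pi.single j 1, 0)
def E3 (j : Fin n) : Vec n := (0, 0, Pi.single j 1)

/-- coordinate functions -/
def Cx (j : Fin n) : Vec n → ℂ := fun p => ((p.1 j : ℝ) : ℂ)
def Cy (j : Fin n) : Vec n → ℂ := fun p => ((p.2.1 j : ℝ) : ℂ)
def Cq (j : Fin n) : Vec n → ℂ := fun p => ((p.2.2 j : ℝ) : ℂ)

def Lx (j : Fin n) : Vec n →L[ℝ] ℂ :=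
  Complex.ofRealCLM.comp ((ContinuousLinearMap.proj j).comp (ContinuousLinearMap.fst ℝ _ _))
def Ly (j : Fin n) : Vec n →L[ℝ] ℂ :=
  Complex.ofRealCLM.comp ((ContinuousLinearMap.proj j).comp
    ((ContinuousLinearMap.fst ℝ _ _).comp (ContinuousLinearMap.snd ℝ _ _)))
def Lq (j : Fin n) : Vec n →L[ℝ] ℂ :=
  Complex.ofRealCLM.comp ((ContinuousLinearMap.proj j).comp
    ((ContinuousLinearMap.snd ℝ _ _).comp (ContinuousLinearMap.snd ℝ _ _)))

lemma Cx_eq (j : Fin n) : Cx j = ⇑(Lx (n := n) j) := rfl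
lemma Cy_eq (j : Fin n) : Cy j = ⇑(Ly (n := n) j) := rfl
lemma Cq_eq (j : Fin n) : Cq j = ⇑(Lq (n := n) j) := rfl

lemma Sm_Cx (j : Fin n) : Sm (Cx (n := n) j) := by rw [Cx_eq]; exact (Lx j).contDiff
lemma Sm_Cy (j : Fin n) : Sm (Cy (n := n) j) := by rw [Cy_eq]; exact (Ly j).contDiff
lemma Sm_Cq (j : Fin n) : Sm (Cq (n := n) j) := by rw [Cq_eq]; exact (Lq j).contDiff

lemma DD_Cx (v : Vec n) (j : Fin n) : DD v (Cx j) = fun _ => ((v.1 j : ℝ) : ℂ) := by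
  funext p
  rw [Cx_eq, DD, (Lx j).fderiv]
  rfl

lemma DD_Cy (v : Vec n) (j : Fin n) : DD v (Cy j) = fun _ => ((v.2.1 j : ℝ) : ℂ) := by
  funext p
  rw [Cy_eq, DD, (Ly j).fderiv]
  rfl

lemma DD_Cq (v : Vec n) (j : Fin n) : DD v (Cq j) = fun _ => ((v.2.2 j : ℝ) : ℂ) := by
  funext p
  rw [Cq_eq, DD, (Lq j).fderiv]
  rfl

lemma DD_const (v : Vec n) (c : ℂ) : DD v (fun _ => c) = fun _ => 0 := by
  funext p
  simp [DD]

lemma Sm_const (c : ℂ) : Sm (fun _ : Vec n => c) := contDiff_const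

lemma DD_add {f g : Vec n → ℂ} (hf : Sm f) (hg : Sm g) (v : Vec n) :
    DD v (fun p => f p + g p) = fun p => DD v f p + DD v g p := by
  funext p
  simp only [DD]
  rw [fderiv_fun_add (hf.diffAt p) (hg.diffAt p)]
  rfl

lemma DD_sub {f g : Vec n → ℂ} (hf : Sm f) (hg : Sm g) (v : Vec n) :
    DD v (fun p => f p - g p) = fun p => DD v f p - DD v g p := by
  funext p
  simp only [DD]
  rw [fderiv_fun_sub (hf.diffAt p) (hg.diffAt p)]
  rfl

lemma DD_mul {f g : Vec n → ℂ} (hf : Sm f) (hg : Sm g) (v : Vec n) :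
    DD v (fun p => f p * g p) = fun p => DD v f p * g p + f p * DD v g p := by
  funext p
  simp only [DD]
  rw [fderiv_fun_mul (hf.diffAt p) (hg.diffAt p)]
  simp
  ring

lemma DD_const_mul {f : Vec n → ℂ} (hf : Sm f) (c : ℂ) (v : Vec n) :
    DD v (fun p => c * f p) = fun p => c * DD v f p := by
  funext p
  simp only [DD]
  rw [fderiv_const_mul (hf.diffAt p) c]
  rfl

lemma DD_sum {F : Fin n → Vec n → ℂ} (hF : ∀ j, Sm (F j)) (v : Vec n) :
    DD v (fun p => ∑ j : Fin n, F j p) = fun p => ∑ j : Fin n, DD v (F j) p := by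
  funext p
  simp only [DD]
  rw [fderiv_fun_sum (fun j _ => (hF j).diffAt p)]
  simp

lemma Sm.add {f g : Vec n → ℂ} (hf : Sm f) (hg : Sm g) : Sm (fun p => f p + g p) := ContDiff.add hf hg
lemma Sm.sub {f g : Vec n → ℂ} (hf : Sm f) (hg : Sm g) : Sm (fun p => f p - g p) := ContDiff.sub hf hg
lemma Sm.mul {f g : Vec n → ℂ} (hf : Sm f) (hg : Sm g) : Sm (fun p => f p * g p) := ContDiff.mul hf hg
lemma Sm.sum {F : Fin n → Vec n → ℂ} (hF : ∀ j, Sm (F j)) : Sm (fun p => ∑ j : Fin n, F j p) :=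
  ContDiff.sum (fun j _ => hF j)

/-- Schwarz symmetry -/
lemma DD_comm {f : Vec n → ℂ} (hf : Sm f) (v w : Vec n) :
    DD v (DD w f) = DD w (DD v f) := by
  funext p
  have key : ∀ u z : Vec n, DD u (DD z f) p = (fderiv ℝ (fderiv ℝ f) p u) z := by
    intro u z
    show fderiv ℝ (fun y => (fderiv ℝ f y) z) p u = _
    rw [fderiv_clm_apply (hf.fderivSm.differentiable (by simp) p) (differentiableAt_const z)]
    simp
  rw [key v w, key w v]
  exact second_derivative_symmetric (fun y => (hf.diffAt y).hasFDerivAt)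
    (hf.fderivSm.differentiable (by simp) p).hasFDerivAt v w


lemma line_hasDerivAt (p v : Vec n) (t0 : ℝ) :
    HasDerivAt (fun t : ℝ => p + (t - t0) • v) v t0 := by
  have h := (((hasDerivAt_id t0).sub_const t0).smul_const v).const_add p
  simpa using h

lemma update_line_x (p : Vec n) (j : Fin n) (t : ℝ) :
    ((Function.update p.1 j t, p.2.1, p.2.2) : Vec n) = p + (t - p.1 j) • E1 j := by
  refine Prod.ext ?_ (Prod.ext ?_ ?_)
  · funext k
    rcases eq_or_ne k j with h | h <;>
      simp [E1, Function.update_apply, Pi.single_apply, h]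
  · simp [E1]
  · simp [E1]

lemma update_line_y (p : Vec n) (j : Fin n) (t : ℝ) :
    ((p.1, Function.update p.2.1 j t, p.2.2) : Vec n) = p + (t - p.2.1 j) • E2 j := by
  refine Prod.ext ?_ (Prod.ext ?_ ?_)
  · simp [E2]
  · funext k
    rcases eq_or_ne k j with h | h <;>
      simp [E2, Function.update_apply, Pi.single_apply, h]
  · simp [E2]

lemma update_line_q (p : Vec n) (j : Fin n) (t : ℝ) :
    ((p.1, p.2.1, Function.update p.2.2 j t) : Vec n) = p + (t - p.2.2 j) • E3 j := by
  refine Prod.ext ?_ (Prod.ext ?_ ?_)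
  · simp [E3]
  · simp [E3]
  · funext k
    rcases eq_or_ne k j with h | h <;>
      simp [E3, Function.update_apply, Pi.single_apply, h]

lemma deriv_along {f : Vec n → ℂ} (hf : Sm f) (p v : Vec n) (t0 : ℝ) :
    deriv (fun t => f (p + (t - t0) • v)) t0 = DD v f p := by
  have h1 : HasDerivAt (fun t => f (p + (t - t0) • v)) (fderiv ℝ f p v) t0 := by
    have h0 : p + (t0 - t0) • v = p := by simp
    have := (h0 ▸ (hf.diffAt p).hasFDerivAt).comp_hasDerivAt t0 (line_hasDerivAt p v t0)
    rw [h0] at this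
    exact this
  exact h1.deriv

lemma pdx_eq {f : Vec n → ℂ} (hf : Sm f) (j : Fin n) : pdx n j f = DD (E1 j) f := by
  funext p
  show deriv _ _ = _
  rw [show (fun t => f (Function.update p.1 j t, p.2.1, p.2.2))
      = fun t => f (p + (t - p.1 j) • E1 j) from funext fun t => by rw [update_line_x]]
  exact deriv_along hf p (E1 j) (p.1 j)

lemma pdy_eq {f : Vec n → ℂ} (hf : Sm f) (j : Fin n) : pdy n j f = DD (E2 j) f := by
  funext p
  show deriv _ _ = _
  rw [show (fun t => f (p.1, Function.update p.2.1 j t, p.2.2))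
      = fun t => f (p + (t - p.2.1 j) • E2 j) from funext fun t => by rw [update_line_y]]
  exact deriv_along hf p (E2 j) (p.2.1 j)

lemma pdq_eq {f : Vec n → ℂ} (hf : Sm f) (j : Fin n) : pdq n j f = DD (E3 j) f := by
  funext p
  show deriv _ _ = _
  rw [show (fun t => f (p.1, p.2.1, Function.update p.2.2 j t))
      = fun t => f (p + (t - p.2.2 j) • E3 j) from funext fun t => by rw [update_line_q]]
  exact deriv_along hf p (E3 j) (p.2.2 j)

/-! coordinate derivative values -/

lemma DD_E1_Cx (k j : Fin n) : DD (E1 k) (Cx j) = fun _ => (if j = k then (1:ℂ) else 0) := by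
  rw [DD_Cx (E1 k) j]; funext p
  simp [E1, Pi.single_apply, apply_ite (fun t : ℝ => (t : ℂ))]

lemma DD_E1_Cy (k j : Fin n) : DD (E1 k) (Cy j) = fun _ => (0:ℂ) := by
  rw [DD_Cy (E1 k) j]; funext p; simp [E1]

lemma DD_E1_Cq (k j : Fin n) : DD (E1 k) (Cq j) = fun _ => (0:ℂ) := by
  rw [DD_Cq (E1 k) j]; funext p; simp [E1]

lemma DD_E2_Cx (k j : Fin n) : DD (E2 k) (Cx j) = fun _ => (0:ℂ) := by
  rw [DD_Cx (E2 k) j]; funext p; simp [E2]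

lemma DD_E2_Cy (k j : Fin n) : DD (E2 k) (Cy j) = fun _ => (if j = k then (1:ℂ) else 0) := by
  rw [DD_Cy (E2 k) j]; funext p
  simp [E2, Pi.single_apply, apply_ite (fun t : ℝ => (t : ℂ))]

lemma DD_E2_Cq (k j : Fin n) : DD (E2 k) (Cq j) = fun _ => (0:ℂ) := by
  rw [DD_Cq (E2 k) j]; funext p; simp [E2]

lemma DD_E3_Cx (k j : Fin n) : DD (E3 k) (Cx j) = fun _ => (0:ℂ) := by
  rw [DD_Cx (E3 k) j]; funext p; simp [E3]

lemma DD_E3_Cy (k j : Fin n) : DD (E3 k) (Cy j) = fun _ => (0:ℂ) := by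
  rw [DD_Cy (E3 k) j]; funext p; simp [E3]

lemma DD_E3_Cq (k j : Fin n) : DD (E3 k) (Cq j) = fun _ => (if j = k then (1:ℂ) else 0) := by
  rw [DD_Cq (E3 k) j]; funext p
  simp [E3, Pi.single_apply, apply_ite (fun t : ℝ => (t : ℂ))]

lemma D2_mul {c g : Vec n → ℂ} (hc : Sm c) (hg : Sm g) (v : Vec n) :
    DD v (DD v (fun p => c p * g p)) = fun p =>
      DD v (DD v c) p * g p + 2 * (DD v c p * DD v g p) + c p * DD v (DD v g) p := by
  rw [DD_mul hc hg v, DD_add ((hc.DD v).mul hg) (hc.mul (hg.DD v)) v,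
    DD_mul (hc.DD v) hg v, DD_mul hc (hg.DD v) v]
  funext p; ring

/-! D-world operators -/

def LapD (f : Vec n → ℂ) : Vec n → ℂ :=
  fun p => ∑ j : Fin n, (DD (E1 j) (DD (E1 j) f) p + DD (E2 j) (DD (E2 j) f) p)

def EulD (g : Vec n → ℂ) : Vec n → ℂ :=
  fun p => ∑ j : Fin n, (Cx j p * DD (E1 j) g p + Cy j p * DD (E2 j) g p)

def DtD (f : Vec n → ℂ) : Vec n → ℂ :=
  fun p => ∑ j : Fin n, (Complex.I * Cq j p * DD (E1 j) f p + DD (E2 j) (DD (E3 j) f) p)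

def DsD (f : Vec n → ℂ) : Vec n → ℂ :=
  fun p => ∑ j : Fin n, (Complex.I * Cq j p * DD (E2 j) f p - DD (E3 j) (DD (E1 j) f) p)

def XsD (f : Vec n → ℂ) : Vec n → ℂ :=
  fun p => ∑ j : Fin n, (Cy j p * DD (E3 j) f p + Complex.I * Cq j p * Cx j p * f p)

def XtD (f : Vec n → ℂ) : Vec n → ℂ :=
  fun p => ∑ j : Fin n, (Cx j p * DD (E3 j) f p - Complex.I * Cy j p * Cq j p * f p)

def RD : Vec n → ℂ := fun p => ∑ j : Fin n, (Cx j p * Cx j p + Cy j p * Cy j p)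

lemma Sm_LapD {f : Vec n → ℂ} (hf : Sm f) : Sm (LapD f) :=
  Sm.sum fun j => (((hf.DD _).DD _)).add (((hf.DD _).DD _))

lemma Sm_EulD {f : Vec n → ℂ} (hf : Sm f) : Sm (EulD f) :=
  Sm.sum fun j => ((Sm_Cx j).mul (hf.DD _)).add ((Sm_Cy j).mul (hf.DD _))

lemma Sm_DtD {f : Vec n → ℂ} (hf : Sm f) : Sm (DtD f) :=
  Sm.sum fun j => (((Sm_const Complex.I).mul (Sm_Cq j)).mul (hf.DD _)).add ((hf.DD _).DD _)

lemma Sm_DsD {f : Vec n → ℂ} (hf : Sm f) : Sm (DsD f) :=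
  Sm.sum fun j => (((Sm_const Complex.I).mul (Sm_Cq j)).mul (hf.DD _)).sub ((hf.DD _).DD _)

lemma Sm_XsD {f : Vec n → ℂ} (hf : Sm f) : Sm (XsD f) :=
  Sm.sum fun j => ((Sm_Cy j).mul (hf.DD _)).add
    ((((Sm_const Complex.I).mul (Sm_Cq j)).mul (Sm_Cx j)).mul hf)

lemma Sm_XtD {f : Vec n → ℂ} (hf : Sm f) : Sm (XtD f) :=
  Sm.sum fun j => ((Sm_Cx j).mul (hf.DD _)).sub
    ((((Sm_const Complex.I).mul (Sm_Cy j)).mul (Sm_Cq j)).mul hf)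

lemma Sm_RD : Sm (RD (n := n)) :=
  Sm.sum fun j => ((Sm_Cx j).mul (Sm_Cx j)).add ((Sm_Cy j).mul (Sm_Cy j))

/-! structural lemmas for LapD -/

lemma LapD_sum {F : Fin n → Vec n → ℂ} (hF : ∀ j, Sm (F j)) :
    LapD (fun p => ∑ j : Fin n, F j p) = fun p => ∑ j : Fin n, LapD (F j) p := by
  have h1 : ∀ v, DD v (fun p => ∑ j : Fin n, F j p) = fun p => ∑ j : Fin n, DD v (F j) p :=
    fun v => DD_sum hF v
  have h2 : ∀ v, DD v (fun p => ∑ j : Fin n, DD v (F j) p)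
      = fun p => ∑ j : Fin n, DD v (DD v (F j)) p :=
    fun v => DD_sum (fun j => (hF j).DD v) v
  funext p
  simp only [LapD, h1, h2]
  rw [show (∑ k : Fin n, (∑ j : Fin n, DD (E1 k) (DD (E1 k) (F j)) p
      + ∑ j : Fin n, DD (E2 k) (DD (E2 k) (F j)) p))
      = ∑ k : Fin n, ∑ j : Fin n, (DD (E1 k) (DD (E1 k) (F j)) p + DD (E2 k) (DD (E2 k) (F j)) p)
    from Finset.sum_congr rfl fun k _ => (Finset.sum_add_distrib).symm]
  exact Finset.sum_comm

lemma LapD_add {f g : Vec n → ℂ} (hf : Sm f) (hg : Sm g) :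
    LapD (fun p => f p + g p) = fun p => LapD f p + LapD g p := by
  funext p
  simp only [LapD, DD_add hf hg, DD_add (hf.DD _) (hg.DD _)]
  rw [← Finset.sum_add_distrib]
  exact Finset.sum_congr rfl fun j _ => by ring

lemma LapD_sub {f g : Vec n → ℂ} (hf : Sm f) (hg : Sm g) :
    LapD (fun p => f p - g p) = fun p => LapD f p - LapD g p := by
  funext p
  simp only [LapD, DD_sub hf hg, DD_sub (hf.DD _) (hg.DD _)]
  rw [← Finset.sum_sub_distrib]
  exact Finset.sum_congr rfl fun j _ => by ring

lemma LapD_const_mul {f : Vec n → ℂ} (hf : Sm f) (c : ℂ) :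
    LapD (fun p => c * f p) = fun p => c * LapD f p := by
  funext p
  simp only [LapD, DD_const_mul hf c, DD_const_mul (hf.DD _) c]
  rw [Finset.mul_sum]
  exact Finset.sum_congr rfl fun j _ => by ring

lemma LapD_mul {c g : Vec n → ℂ} (hc : Sm c) (hg : Sm g) :
    LapD (fun p => c p * g p) = fun p =>
      LapD c p * g p
      + 2 * ∑ k : Fin n, (DD (E1 k) c p * DD (E1 k) g p + DD (E2 k) c p * DD (E2 k) g p)
      + c p * LapD g p := by
  funext p
  simp only [LapD, D2_mul hc hg]
  rw [Finset.sum_mul, Finset.mul_sum, Finset.mul_sum, ← Finset.sum_add_distrib,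
    ← Finset.sum_add_distrib]
  exact Finset.sum_congr rfl fun k _ => by ring

lemma LapD_DD {g : Vec n → ℂ} (hg : Sm g) (w : Vec n) :
    LapD (DD w g) = DD w (LapD g) := by
  have h1 : DD w (LapD g) = fun p => ∑ k : Fin n,
      (DD w (DD (E1 k) (DD (E1 k) g)) p + DD w (DD (E2 k) (DD (E2 k) g)) p) := by
    have := DD_sum (F := fun k => fun p => DD (E1 k) (DD (E1 k) g) p + DD (E2 k) (DD (E2 k) g) p)
      (fun k => (((hg.DD _).DD _)).add (((hg.DD _).DD _))) w
    rw [show LapD g = fun p => ∑ k : Fin n,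
      ((fun p => DD (E1 k) (DD (E1 k) g) p + DD (E2 k) (DD (E2 k) g) p) p) from rfl, this]
    funext p
    exact Finset.sum_congr rfl fun k _ => by
      rw [DD_add ((hg.DD (E1 k)).DD (E1 k)) ((hg.DD (E2 k)).DD (E2 k)) w]
  rw [h1]
  funext p
  simp only [LapD]
  refine Finset.sum_congr rfl fun k _ => ?_
  rw [DD_comm hg (E1 k) w, DD_comm (hg.DD (E1 k)) (E1 k) w,
    DD_comm hg (E2 k) w, DD_comm (hg.DD (E2 k)) (E2 k) w]

lemma DD_zero_fun (v : Vec n) : DD v (fun _ : Vec n => (0:ℂ)) = fun _ => 0 := DD_const v 0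

lemma LapD_Cx (j : Fin n) : LapD (Cx j) = fun _ => 0 := by
  funext p
  simp only [LapD]
  rw [Finset.sum_eq_zero]
  intro k _
  rw [DD_Cx (E1 k) j, DD_Cx (E2 k) j, DD_const, DD_const]
  simp

lemma LapD_Cy (j : Fin n) : LapD (Cy j) = fun _ => 0 := by
  funext p
  simp only [LapD]
  rw [Finset.sum_eq_zero]
  intro k _
  rw [DD_Cy (E1 k) j, DD_Cy (E2 k) j, DD_const, DD_const]
  simp

lemma LapD_Cq (j : Fin n) : LapD (Cq j) = fun _ => 0 := by
  funext p
  simp only [LapD]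
  rw [Finset.sum_eq_zero]
  intro k _
  rw [DD_Cq (E1 k) j, DD_Cq (E2 k) j, DD_const, DD_const]
  simp

lemma Sm_cqx (j : Fin n) : Sm (fun p : Vec n => Complex.I * Cq j p * Cx j p) :=
  ((Sm_const Complex.I).mul (Sm_Cq j)).mul (Sm_Cx j)

lemma Sm_cyq (j : Fin n) : Sm (fun p : Vec n => Complex.I * Cy j p * Cq j p) :=
  ((Sm_const Complex.I).mul (Sm_Cy j)).mul (Sm_Cq j)

lemma Sm_Icq (j : Fin n) : Sm (fun p : Vec n => Complex.I * Cq j p) :=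
  (Sm_const Complex.I).mul (Sm_Cq j)

lemma Sm_Icy (j : Fin n) : Sm (fun p : Vec n => Complex.I * Cy j p) :=
  (Sm_const Complex.I).mul (Sm_Cy j)

lemma DD_Icq (j : Fin n) (v : Vec n) :
    DD v (fun p : Vec n => Complex.I * Cq j p) = fun _ => Complex.I * ((v.2.2 j : ℝ) : ℂ) := by
  rw [DD_const_mul (Sm_Cq j) Complex.I, DD_Cq]

lemma DD_Icy (j : Fin n) (v : Vec n) :
    DD v (fun p : Vec n => Complex.I * Cy j p) = fun _ => Complex.I * ((v.2.1 j : ℝ) : ℂ) := by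
  rw [DD_const_mul (Sm_Cy j) Complex.I, DD_Cy]

lemma DD_cqx (j : Fin n) (v : Vec n) :
    DD v (fun p : Vec n => Complex.I * Cq j p * Cx j p)
      = fun p => Complex.I * ((v.2.2 j : ℝ) : ℂ) * Cx j p
          + Complex.I * Cq j p * ((v.1 j : ℝ) : ℂ) := by
  rw [DD_mul (Sm_Icq j) (Sm_Cx j) v, DD_Icq j v, DD_Cx]

lemma DD_cyq (j : Fin n) (v : Vec n) :
    DD v (fun p : Vec n => Complex.I * Cy j p * Cq j p)
      = fun p => Complex.I * ((v.2.1 j : ℝ) : ℂ) * Cq j p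
          + Complex.I * Cy j p * ((v.2.2 j : ℝ) : ℂ) := by
  rw [DD_mul (Sm_Icy j) (Sm_Cq j) v, DD_Icy j v, DD_Cq]

lemma DDx_cqx (j k : Fin n) :
    DD (E1 k) (fun p : Vec n => Complex.I * Cq j p * Cx j p)
      = fun p => (if j = k then (1:ℂ) else 0) * (Complex.I * Cq j p) := by
  rw [DD_cqx j (E1 k)]
  funext p
  simp [E1, Pi.single_apply, apply_ite (fun t : ℝ => (t : ℂ))]

lemma DDy_cqx (j k : Fin n) :
    DD (E2 k) (fun p : Vec n => Complex.I * Cq j p * Cx j p) = fun _ => 0 := by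
  rw [DD_cqx j (E2 k)]
  funext p
  simp [E2]

lemma DDx_cyq (j k : Fin n) :
    DD (E1 k) (fun p : Vec n => Complex.I * Cy j p * Cq j p) = fun _ => 0 := by
  rw [DD_cyq j (E1 k)]
  funext p
  simp [E1]

lemma DDy_cyq (j k : Fin n) :
    DD (E2 k) (fun p : Vec n => Complex.I * Cy j p * Cq j p)
      = fun p => (if j = k then (1:ℂ) else 0) * (Complex.I * Cq j p) := by
  rw [DD_cyq j (E2 k)]
  funext p
  simp [E2, Pi.single_apply, apply_ite (fun t : ℝ => (t : ℂ))]

lemma DDx_Icq (j k : Fin n) :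
    DD (E1 k) (fun p : Vec n => Complex.I * Cq j p) = fun _ => 0 := by
  rw [DD_Icq j (E1 k)]; funext p; simp [E1]

lemma DDy_Icq (j k : Fin n) :
    DD (E2 k) (fun p : Vec n => Complex.I * Cq j p) = fun _ => 0 := by
  rw [DD_Icq j (E2 k)]; funext p; simp [E2]

lemma LapD_cqx (j : Fin n) :
    LapD (fun p : Vec n => Complex.I * Cq j p * Cx j p) = fun _ => 0 := by
  rw [LapD_mul (Sm_Icq j) (Sm_Cx j)]
  funext p
  rw [LapD_const_mul (Sm_Cq j) Complex.I, LapD_Cq j, LapD_Cx j]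
  simp only [DD_E1_Cx, DD_E2_Cx, DDx_Icq, DDy_Icq]
  simp

lemma LapD_cyq (j : Fin n) :
    LapD (fun p : Vec n => Complex.I * Cy j p * Cq j p) = fun _ => 0 := by
  rw [LapD_mul (Sm_Icy j) (Sm_Cq j)]
  funext p
  rw [LapD_const_mul (Sm_Cy j) Complex.I, LapD_Cy j, LapD_Cq j]
  have h1 : ∀ k : Fin n, DD (E1 k) (fun p : Vec n => Complex.I * Cy j p) = fun _ => 0 := by
    intro k; rw [DD_Icy j (E1 k)]; funext p; simp [E1]
  simp only [DD_E1_Cq, DD_E2_Cq, h1]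
  simp

lemma LapD_harm_DD {f : Vec n → ℂ} (hf : Sm f) (h0 : LapD f = fun _ => 0) (w : Vec n) :
    LapD (DD w f) = fun _ => 0 := by
  rw [LapD_DD hf w, h0, DD_const]

lemma LapD_XsD {f : Vec n → ℂ} (hf : Sm f) (h0 : LapD f = fun _ => 0) :
    LapD (XsD f) = fun p => 2 * DtD f p := by
  have hA : ∀ j : Fin n, Sm (fun p : Vec n => Cy j p * DD (E3 j) f p) :=
    fun j => (Sm_Cy j).mul (hf.DD _)
  have hB : ∀ j : Fin n, Sm (fun p : Vec n => Complex.I * Cq j p * Cx j p * f p) :=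
    fun j => (Sm_cqx j).mul hf
  have hT : ∀ j : Fin n,
      Sm (fun p : Vec n => Cy j p * DD (E3 j) f p + Complex.I * Cq j p * Cx j p * f p) :=
    fun j => (hA j).add (hB j)
  have expand : XsD f = fun p => ∑ j : Fin n,
      (fun p => Cy j p * DD (E3 j) f p + Complex.I * Cq j p * Cx j p * f p) p := rfl
  rw [expand, LapD_sum hT]
  funext p
  have hLA : ∀ j : Fin n, LapD (fun p : Vec n => Cy j p * DD (E3 j) f p) p
      = 2 * DD (E2 j) (DD (E3 j) f) p := by
    intro j
    rw [LapD_mul (Sm_Cy j) (hf.DD (E3 j)), LapD_Cy j, LapD_harm_DD hf h0 (E3 j)]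
    simp only [DD_E1_Cy, DD_E2_Cy]
    simp [ite_mul, Finset.sum_ite_eq]
  have hLB : ∀ j : Fin n, LapD (fun p : Vec n => Complex.I * Cq j p * Cx j p * f p) p
      = 2 * (Complex.I * Cq j p * DD (E1 j) f p) := by
    intro j
    rw [LapD_mul (Sm_cqx j) hf, LapD_cqx j, h0]
    simp only [DDx_cqx, DDy_cqx]
    simp [ite_mul, Finset.sum_ite_eq]
  have step : ∀ j : Fin n,
      LapD (fun p : Vec n => Cy j p * DD (E3 j) f p + Complex.I * Cq j p * Cx j p * f p) p
        = 2 * (Complex.I * Cq j p * DD (E1 j) f p + DD (E2 j) (DD (E3 j) f) p) := by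
    intro j
    rw [LapD_add (hA j) (hB j)]
    simp only []
    rw [hLA j, hLB j]
    ring
  rw [Finset.sum_congr rfl fun j _ => step j]
  rw [DtD, ← Finset.mul_sum]

lemma LapD_XtD {f : Vec n → ℂ} (hf : Sm f) (h0 : LapD f = fun _ => 0) :
    LapD (XtD f) = fun p => (-2) * DsD f p := by
  have hA : ∀ j : Fin n, Sm (fun p : Vec n => Cx j p * DD (E3 j) f p) :=
    fun j => (Sm_Cx j).mul (hf.DD _)
  have hB : ∀ j : Fin n, Sm (fun p : Vec n => Complex.I * Cy j p * Cq j p * f p) :=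
    fun j => (Sm_cyq j).mul hf
  have hT : ∀ j : Fin n,
      Sm (fun p : Vec n => Cx j p * DD (E3 j) f p - Complex.I * Cy j p * Cq j p * f p) :=
    fun j => (hA j).sub (hB j)
  have expand : XtD f = fun p => ∑ j : Fin n,
      (fun p => Cx j p * DD (E3 j) f p - Complex.I * Cy j p * Cq j p * f p) p := rfl
  rw [expand, LapD_sum hT]
  funext p
  have hLA : ∀ j : Fin n, LapD (fun p : Vec n => Cx j p * DD (E3 j) f p) p
      = 2 * DD (E1 j) (DD (E3 j) f) p := by
    intro j
    rw [LapD_mul (Sm_Cx j) (hf.DD (E3 j)), LapD_Cx j, LapD_harm_DD hf h0 (E3 j)]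
    simp only [DD_E1_Cx, DD_E2_Cx]
    simp [ite_mul, Finset.sum_ite_eq]
  have hLB : ∀ j : Fin n, LapD (fun p : Vec n => Complex.I * Cy j p * Cq j p * f p) p
      = 2 * (Complex.I * Cq j p * DD (E2 j) f p) := by
    intro j
    rw [LapD_mul (Sm_cyq j) hf, LapD_cyq j, h0]
    simp only [DDx_cyq, DDy_cyq]
    simp [ite_mul, Finset.sum_ite_eq]
  have step : ∀ j : Fin n,
      LapD (fun p : Vec n => Cx j p * DD (E3 j) f p - Complex.I * Cy j p * Cq j p * f p) p
        = (-2) * (Complex.I * Cq j p * DD (E2 j) f p - DD (E3 j) (DD (E1 j) f) p) := by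
    intro j
    rw [LapD_sub (hA j) (hB j)]
    simp only []
    rw [hLA j, hLB j, DD_comm hf (E1 j) (E3 j)]
    ring
  rw [Finset.sum_congr rfl fun j _ => step j]
  rw [DsD, ← Finset.mul_sum]

lemma LapD_EulD {g : Vec n → ℂ} (hg : Sm g) :
    LapD (EulD g) = fun p => EulD (LapD g) p + 2 * LapD g p := by
  have hA : ∀ j : Fin n, Sm (fun p : Vec n => Cx j p * DD (E1 j) g p) :=
    fun j => (Sm_Cx j).mul (hg.DD _)
  have hB : ∀ j : Fin n, Sm (fun p : Vec n => Cy j p * DD (E2 j) g p) :=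
    fun j => (Sm_Cy j).mul (hg.DD _)
  have hT : ∀ j : Fin n, Sm (fun p : Vec n => Cx j p * DD (E1 j) g p + Cy j p * DD (E2 j) g p) :=
    fun j => (hA j).add (hB j)
  have expand : EulD g = fun p => ∑ j : Fin n,
      (fun p => Cx j p * DD (E1 j) g p + Cy j p * DD (E2 j) g p) p := rfl
  rw [expand, LapD_sum hT]
  funext p
  have hLA : ∀ j : Fin n, LapD (fun p : Vec n => Cx j p * DD (E1 j) g p) p
      = 2 * DD (E1 j) (DD (E1 j) g) p + Cx j p * DD (E1 j) (LapD g) p := by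
    intro j
    rw [LapD_mul (Sm_Cx j) (hg.DD (E1 j)), LapD_Cx j, LapD_DD hg (E1 j)]
    simp only [DD_E1_Cx, DD_E2_Cx]
    simp [ite_mul, Finset.sum_ite_eq]
  have hLB : ∀ j : Fin n, LapD (fun p : Vec n => Cy j p * DD (E2 j) g p) p
      = 2 * DD (E2 j) (DD (E2 j) g) p + Cy j p * DD (E2 j) (LapD g) p := by
    intro j
    rw [LapD_mul (Sm_Cy j) (hg.DD (E2 j)), LapD_Cy j, LapD_DD hg (E2 j)]
    simp only [DD_E1_Cy, DD_E2_Cy]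
    simp [ite_mul, Finset.sum_ite_eq]
  have step : ∀ j : Fin n,
      LapD (fun p : Vec n => Cx j p * DD (E1 j) g p + Cy j p * DD (E2 j) g p) p
        = (Cx j p * DD (E1 j) (LapD g) p + Cy j p * DD (E2 j) (LapD g) p)
          + 2 * (DD (E1 j) (DD (E1 j) g) p + DD (E2 j) (DD (E2 j) g) p) := by
    intro j
    rw [LapD_add (hA j) (hB j)]
    simp only []
    rw [hLA j, hLB j]
    ring
  rw [Finset.sum_congr rfl fun j _ => step j, Finset.sum_add_distrib, ← Finset.mul_sum]
  rfl

lemma EulD_const_mul {g : Vec n → ℂ} (hg : Sm g) (c : ℂ) :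
    EulD (fun p => c * g p) = fun p => c * EulD g p := by
  funext p
  simp only [EulD, DD_const_mul hg c, Finset.mul_sum]
  exact Finset.sum_congr rfl fun j _ => by ring

lemma LapD_DtD {f : Vec n → ℂ} (hf : Sm f) (h0 : LapD f = fun _ => 0) :
    LapD (DtD f) = fun _ => 0 := by
  have hA : ∀ j : Fin n, Sm (fun p : Vec n => Complex.I * Cq j p * DD (E1 j) f p) :=
    fun j => (Sm_Icq j).mul (hf.DD _)
  have hB : ∀ j : Fin n, Sm (fun p : Vec n => DD (E2 j) (DD (E3 j) f) p) :=
    fun j => (hf.DD _).DD _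
  have hT : ∀ j : Fin n,
      Sm (fun p : Vec n => Complex.I * Cq j p * DD (E1 j) f p + DD (E2 j) (DD (E3 j) f) p) :=
    fun j => (hA j).add (hB j)
  have expand : DtD f = fun p => ∑ j : Fin n,
      (fun p => Complex.I * Cq j p * DD (E1 j) f p + DD (E2 j) (DD (E3 j) f) p) p := rfl
  rw [expand, LapD_sum hT]
  funext p
  rw [Finset.sum_eq_zero]
  intro j _
  rw [LapD_add (hA j) (hB j)]
  simp only []
  have h1 : LapD (fun p : Vec n => Complex.I * Cq j p * DD (E1 j) f p) p = 0 := by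
    rw [LapD_mul (Sm_Icq j) (hf.DD (E1 j))]
    rw [LapD_const_mul (Sm_Cq j) Complex.I, LapD_Cq j, LapD_harm_DD hf h0 (E1 j)]
    simp only [DDx_Icq, DDy_Icq]
    simp
  have h2 : LapD (fun p : Vec n => DD (E2 j) (DD (E3 j) f) p) p = 0 := by
    rw [show (fun p : Vec n => DD (E2 j) (DD (E3 j) f) p) = DD (E2 j) (DD (E3 j) f) from rfl]
    rw [LapD_DD (hf.DD (E3 j)) (E2 j), LapD_harm_DD hf h0 (E3 j), DD_const]
  rw [h1, h2]
  ring

lemma LapD_DsD {f : Vec n → ℂ} (hf : Sm f) (h0 : LapD f = fun _ => 0) :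
    LapD (DsD f) = fun _ => 0 := by
  have hA : ∀ j : Fin n, Sm (fun p : Vec n => Complex.I * Cq j p * DD (E2 j) f p) :=
    fun j => (Sm_Icq j).mul (hf.DD _)
  have hB : ∀ j : Fin n, Sm (fun p : Vec n => DD (E3 j) (DD (E1 j) f) p) :=
    fun j => (hf.DD _).DD _
  have hT : ∀ j : Fin n,
      Sm (fun p : Vec n => Complex.I * Cq j p * DD (E2 j) f p - DD (E3 j) (DD (E1 j) f) p) :=
    fun j => (hA j).sub (hB j)
  have expand : DsD f = fun p => ∑ j : Fin n,
      (fun p => Complex.I * Cq j p * DD (E2 j) f p - DD (E3 j) (DD (E1 j) f) p) p := rfl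
  rw [expand, LapD_sum hT]
  funext p
  rw [Finset.sum_eq_zero]
  intro j _
  rw [LapD_sub (hA j) (hB j)]
  simp only []
  have h1 : LapD (fun p : Vec n => Complex.I * Cq j p * DD (E2 j) f p) p = 0 := by
    rw [LapD_mul (Sm_Icq j) (hf.DD (E2 j))]
    rw [LapD_const_mul (Sm_Cq j) Complex.I, LapD_Cq j, LapD_harm_DD hf h0 (E2 j)]
    simp only [DDx_Icq, DDy_Icq]
    simp
  have h2 : LapD (fun p : Vec n => DD (E3 j) (DD (E1 j) f) p) p = 0 := by
    rw [show (fun p : Vec n => DD (E3 j) (DD (E1 j) f) p) = DD (E3 j) (DD (E1 j) f) from rfl]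
    rw [LapD_DD (hf.DD (E1 j)) (E3 j), LapD_harm_DD hf h0 (E1 j), DD_const]
  rw [h1, h2]
  ring

lemma LapD_RD : LapD (RD (n := n)) = fun _ => (n : ℂ) * 4 := by
  have hT : ∀ j : Fin n, Sm (fun p : Vec n => Cx j p * Cx j p + Cy j p * Cy j p) :=
    fun j => ((Sm_Cx j).mul (Sm_Cx j)).add ((Sm_Cy j).mul (Sm_Cy j))
  have expand : RD (n := n) = fun p => ∑ j : Fin n,
      (fun p => Cx j p * Cx j p + Cy j p * Cy j p) p := rfl
  rw [expand, LapD_sum hT]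
  funext p
  have step : ∀ j : Fin n,
      LapD (fun p : Vec n => Cx j p * Cx j p + Cy j p * Cy j p) p = 4 := by
    intro j
    rw [LapD_add ((Sm_Cx j).mul (Sm_Cx j)) ((Sm_Cy j).mul (Sm_Cy j))]
    simp only []
    rw [LapD_mul (Sm_Cx j) (Sm_Cx j), LapD_mul (Sm_Cy j) (Sm_Cy j), LapD_Cx j, LapD_Cy j]
    simp only [DD_E1_Cx, DD_E2_Cx, DD_E1_Cy, DD_E2_Cy]
    simp [ite_mul, Finset.sum_ite_eq]
    ring
  rw [Finset.sum_congr rfl fun j _ => step j]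
  simp [Finset.sum_const, mul_comm]

lemma DD_E1_RD (k : Fin n) : DD (E1 k) (RD (n := n)) = fun p => 2 * Cx k p := by
  have hT : ∀ j : Fin n, Sm (fun p : Vec n => Cx j p * Cx j p + Cy j p * Cy j p) :=
    fun j => ((Sm_Cx j).mul (Sm_Cx j)).add ((Sm_Cy j).mul (Sm_Cy j))
  have expand : RD (n := n) = fun p => ∑ j : Fin n,
      (fun p => Cx j p * Cx j p + Cy j p * Cy j p) p := rfl
  rw [expand, DD_sum hT (E1 k)]
  funext p
  have step : ∀ j : Fin n,
      DD (E1 k) (fun p : Vec n => Cx j p * Cx j p + Cy j p * Cy j p) p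
        = (if j = k then (2:ℂ) * Cx j p else 0) := by
    intro j
    rw [DD_add ((Sm_Cx j).mul (Sm_Cx j)) ((Sm_Cy j).mul (Sm_Cy j)) (E1 k)]
    simp only []
    rw [DD_mul (Sm_Cx j) (Sm_Cx j) (E1 k), DD_mul (Sm_Cy j) (Sm_Cy j) (E1 k)]
    simp only [DD_E1_Cx, DD_E1_Cy]
    by_cases h : j = k <;> simp [h] <;> ring
  rw [Finset.sum_congr rfl fun j _ => step j]
  rw [Finset.sum_ite_eq' Finset.univ k (fun j => (2:ℂ) * Cx j p)]
  simp

lemma DD_E2_RD (k : Fin n) : DD (E2 k) (RD (n := n)) = fun p => 2 * Cy k p := by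
  have hT : ∀ j : Fin n, Sm (fun p : Vec n => Cx j p * Cx j p + Cy j p * Cy j p) :=
    fun j => ((Sm_Cx j).mul (Sm_Cx j)).add ((Sm_Cy j).mul (Sm_Cy j))
  have expand : RD (n := n) = fun p => ∑ j : Fin n,
      (fun p => Cx j p * Cx j p + Cy j p * Cy j p) p := rfl
  rw [expand, DD_sum hT (E2 k)]
  funext p
  have step : ∀ j : Fin n,
      DD (E2 k) (fun p : Vec n => Cx j p * Cx j p + Cy j p * Cy j p) p
        = (if j = k then (2:ℂ) * Cy j p else 0) := by
    intro j
    rw [DD_add ((Sm_Cx j).mul (Sm_Cx j)) ((Sm_Cy j).mul (Sm_Cy j)) (E2 k)]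
    simp only []
    rw [DD_mul (Sm_Cx j) (Sm_Cx j) (E2 k), DD_mul (Sm_Cy j) (Sm_Cy j) (E2 k)]
    simp only [DD_E2_Cx, DD_E2_Cy]
    by_cases h : j = k <;> simp [h] <;> ring
  rw [Finset.sum_congr rfl fun j _ => step j]
  rw [Finset.sum_ite_eq' Finset.univ k (fun j => (2:ℂ) * Cy j p)]
  simp

lemma LapD_RD_mul {g : Vec n → ℂ} (hg : Sm g) :
    LapD (fun p => RD p * g p) = fun p =>
      (n : ℂ) * 4 * g p + 4 * EulD g p + RD p * LapD g p := by
  rw [LapD_mul Sm_RD hg]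
  funext p
  rw [LapD_RD]
  simp only [DD_E1_RD, DD_E2_RD, EulD]
  have h : (2:ℂ) * ∑ k : Fin n,
        (2 * Cx k p * DD (E1 k) g p + 2 * Cy k p * DD (E2 k) g p)
      = 4 * ∑ k : Fin n, (Cx k p * DD (E1 k) g p + Cy k p * DD (E2 k) g p) := by
    rw [Finset.mul_sum, Finset.mul_sum]
    exact Finset.sum_congr rfl fun k _ => by ring
  rw [h]


/-! conversion lemmas -/

lemma Xs_eq {f : Vec n → ℂ} (hf : Sm f) : Xs n f = XsD f := by
  funext p
  simp only [Xs, XsD]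
  exact Finset.sum_congr rfl fun j _ => by rw [pdq_eq hf j]; rfl

lemma Xt_eq {f : Vec n → ℂ} (hf : Sm f) : Xt n f = XtD f := by
  funext p
  simp only [Xt, XtD]
  exact Finset.sum_congr rfl fun j _ => by rw [pdq_eq hf j]; rfl

lemma Dt_eq {f : Vec n → ℂ} (hf : Sm f) : Dt n f = DtD f := by
  funext p
  simp only [Dt, DtD]
  exact Finset.sum_congr rfl fun j _ => by
    rw [pdx_eq hf j, pdq_eq hf j, pdy_eq (hf.DD (E3 j)) j]; rfl

lemma Ds_eq {f : Vec n → ℂ} (hf : Sm f) : Ds n f = DsD f := by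
  funext p
  simp only [Ds, DsD]
  exact Finset.sum_congr rfl fun j _ => by
    rw [pdy_eq hf j, pdx_eq hf j, pdq_eq (hf.DD (E1 j)) j]; rfl

lemma Eul_eq {g : Vec n → ℂ} (hg : Sm g) : EulerOp n g = EulD g := by
  funext p
  simp only [EulerOp, EulD]
  exact Finset.sum_congr rfl fun j _ => by rw [pdx_eq hg j, pdy_eq hg j]; rfl

lemma Lap_eq {f : Vec n → ℂ} (hf : Sm f) : Lap n f = LapD f := by
  funext p
  simp only [Lap, LapD]
  exact Finset.sum_congr rfl fun j _ => by
    rw [pdx_eq hf j, pdx_eq (hf.DD (E1 j)) j, pdy_eq hf j, pdy_eq (hf.DD (E2 j)) j]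

lemma r2_eq : r2 n = RD (n := n) := by
  funext p
  simp only [r2, RD, Cx, Cy]
  push_cast
  exact Finset.sum_congr rfl fun j _ => by ring

lemma PsOp_eq {f : Vec n → ℂ} (hf : Sm f) : PsOp n f = fun p =>
    EulD (XsD f) p + ((n : ℂ) - 2) * XsD f p - (1 / 2 : ℂ) * (RD p * DtD f p) := by
  funext p
  simp only [PsOp]
  rw [Xs_eq hf, Dt_eq hf, Eul_eq (Sm_XsD hf), show r2 n p = RD p from congrFun r2_eq p]
  ring

lemma PtOp_eq {f : Vec n → ℂ} (hf : Sm f) : PtOp n f = fun p =>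
    EulD (XtD f) p + ((n : ℂ) - 2) * XtD f p + (1 / 2 : ℂ) * (RD p * DsD f p) := by
  funext p
  simp only [PtOp]
  rw [Xt_eq hf, Ds_eq hf, Eul_eq (Sm_XtD hf), show r2 n p = RD p from congrFun r2_eq p]
  ring

end Aux

open Aux

theorem projected_duals_preserve_harmonicity
    (n : ℕ) (hn : 1 ≤ n) (f : Vec n → ℂ) (hf : ContDiff ℝ (⊤ : ℕ∞) f)
    (hharm : Lap n f = fun _ => 0) :
    Lap n (PsOp n f) = (fun _ => 0) ∧ Lap n (PtOp n f) = (fun _ => 0) := by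
  have hf' : Sm f := hf
  have h0 : LapD f = fun _ => 0 := by rw [← Lap_eq hf']; exact hharm
  constructor
  · -- P_s
    have h1 : Sm (fun p : Vec n => EulD (XsD f) p + ((n : ℂ) - 2) * XsD f p) :=
      (Sm_EulD (Sm_XsD hf')).add ((Sm_const _).mul (Sm_XsD hf'))
    have h2 : Sm (fun p : Vec n => (1 / 2 : ℂ) * (RD p * DtD f p)) :=
      (Sm_const _).mul (Sm_RD.mul (Sm_DtD hf'))
    have hG : Sm (fun p : Vec n =>
        EulD (XsD f) p + ((n : ℂ) - 2) * XsD f p - (1 / 2 : ℂ) * (RD p * DtD f p)) :=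
      h1.sub h2
    rw [PsOp_eq hf', Lap_eq hG, LapD_sub h1 h2,
      LapD_add (Sm_EulD (Sm_XsD hf')) ((Sm_const _).mul (Sm_XsD hf')),
      LapD_EulD (Sm_XsD hf'), LapD_XsD hf' h0,
      LapD_const_mul (Sm_XsD hf') ((n : ℂ) - 2), LapD_XsD hf' h0,
      LapD_const_mul (Sm_RD.mul (Sm_DtD hf')) ((1 / 2 : ℂ)),
      LapD_RD_mul (Sm_DtD hf'), LapD_DtD hf' h0,
      EulD_const_mul (Sm_DtD hf') 2]
    funext p
    simp only []
    ring
  · -- P_t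
    have h1 : Sm (fun p : Vec n => EulD (XtD f) p + ((n : ℂ) - 2) * XtD f p) :=
      (Sm_EulD (Sm_XtD hf')).add ((Sm_const _).mul (Sm_XtD hf'))
    have h2 : Sm (fun p : Vec n => (1 / 2 : ℂ) * (RD p * DsD f p)) :=
      (Sm_const _).mul (Sm_RD.mul (Sm_DsD hf'))
    have hG : Sm (fun p : Vec n =>
        EulD (XtD f) p + ((n : ℂ) - 2) * XtD f p + (1 / 2 : ℂ) * (RD p * DsD f p)) :=
      h1.add h2
    rw [PtOp_eq hf', Lap_eq hG, LapD_add h1 h2,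
      LapD_add (Sm_EulD (Sm_XtD hf')) ((Sm_const _).mul (Sm_XtD hf')),
      LapD_EulD (Sm_XtD hf'), LapD_XtD hf' h0,
      LapD_const_mul (Sm_XtD hf') ((n : ℂ) - 2), LapD_XtD hf' h0,
      LapD_const_mul (Sm_RD.mul (Sm_DsD hf')) ((1 / 2 : ℂ)),
      LapD_RD_mul (Sm_DsD hf'), LapD_DsD hf' h0,
      EulD_const_mul (Sm_DsD hf') (-2)]
    funext p
    simp only []
    ring
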